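/- A graph on 8 vertices with no independent set of size 3 and no K_4 subgraph admits no separation of order 3; hence, combined with the absance of separations of order ≤ 2, such a graph is 4-connected. -/
import Mathlib

open Finset

private lemma noIndep3 {H : SimpleGraph (Fin 8)} (hind : Hᶜ.CliqueFree 3)
    {a b c : Fin 8} (hab : a ≠ b) (hac : a ≠ c) (hbc : b ≠ c)
    (nab : ¬ H.Adj a b) (nac : ¬ H.Adj a c) (nbc : ¬ H.Adj b c) : False := by
  refine hind {a, b, c} ⟨?_, ?_⟩
  · intro x hx y hy hxy
    simp only [coe_insert, Set.mem_insert_iff, coe_singleton, Set.mem_singleton_iff] at hx hy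
    rw [SimpleGraph.compl_adj]
    rcases hx with rfl | rfl | rfl <;> rcases hy with rfl | rfl | rfl <;>
      first
        | exact absurd rfl hxy
        | exact ⟨hxy, nab⟩
        | exact ⟨hxy, nac⟩
        | exact ⟨hxy, nbc⟩
        | exact ⟨hxy, fun h => nab h.symm⟩
        | exact ⟨hxy, fun h => nac h.symm⟩
        | exact ⟨hxy, fun h => nbc h.symm⟩
  · rw [card_insert_of_notMem (by simp [hab, hac]),
      card_insert_of_notMem (by simp [hbc]), card_singleton]

private lemma noKfour {H : SimpleGraph (Fin 8)} (hK4 : H.CliqueFree 4)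
    {t : Finset (Fin 8)} (ht : t.card = 4)
    (h : ∀ x ∈ t, ∀ y ∈ t, x ≠ y → H.Adj x y) : False := by
  refine hK4 t ⟨?_, ht⟩
  intro x hx y hy hxy
  exact h x (by simpa using hx) y (by simpa using hy) hxy

private lemma noKfour' {H : SimpleGraph (Fin 8)} (hK4 : H.CliqueFree 4)
    {a b c d : Fin 8} (hab : H.Adj a b) (hac : H.Adj a c) (had : H.Adj a d)
    (hbc : H.Adj b c) (hbd : H.Adj b d) (hcd : H.Adj c d) : False := by
  refine noKfour hK4 (t := {a, b, c, d}) ?_ ?_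
  · rw [card_insert_of_notMem (by simp [hab.ne, hac.ne, had.ne]),
      card_insert_of_notMem (by simp [hbc.ne, hbd.ne]),
      card_insert_of_notMem (by simp [hcd.ne]), card_singleton]
  · intro x hx y hy hxy
    simp only [mem_insert, mem_singleton] at hx hy
    rcases hx with rfl | rfl | rfl | rfl <;> rcases hy with rfl | rfl | rfl | rfl <;>
      first
        | exact absurd rfl hxy
        | assumption
        | exact hab.symm
        | exact hac.symm
        | exact had.symm
        | exact hbc.symm
        | exact hbd.symm
        | exact hcd.symm

/-- A vertex adjacent to all of a triangle gives `K₄`, so it misses some vertex. -/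
private lemma missSome {H : SimpleGraph (Fin 8)} (hK4 : H.CliqueFree 4)
    {s : Fin 8} {Y : Finset (Fin 8)} (hY : Y.card = 3) (hs : s ∉ Y)
    (hcl : ∀ a ∈ Y, ∀ b ∈ Y, a ≠ b → H.Adj a b) : ∃ y ∈ Y, ¬ H.Adj s y := by
  by_contra h
  push_neg at h
  refine noKfour hK4 (t := insert s Y) ?_ ?_
  · rw [card_insert_of_notMem hs, hY]
  · intro x hx y hy hxy
    simp only [mem_insert] at hx hy
    rcases hx with rfl | hx <;> rcases hy with rfl | hy
    · exact absurd rfl hxy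
    · exact h y hy
    · exact (h x hx).symm
    · exact hcl x hx y hy hxy

/-- The (2,3) case of the separation argument. -/
private lemma case23 {H : SimpleGraph (Fin 8)} (hind : Hᶜ.CliqueFree 3)
    (hK4 : H.CliqueFree 4) {X Y S : Finset (Fin 8)}
    (hd1 : Disjoint X Y) (hd2 : Disjoint X S) (hd3 : Disjoint Y S)
    (hsep : ∀ a ∈ X, ∀ b ∈ Y, ¬ H.Adj a b)
    (hXcl : ∀ a ∈ X, ∀ b ∈ X, a ≠ b → H.Adj a b)
    (hYcl : ∀ a ∈ Y, ∀ b ∈ Y, a ≠ b → H.Adj a b)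
    (hX2 : X.card = 2) (hY3 : Y.card = 3) (hS3 : S.card = 3) : False := by
  have hd1' := Finset.disjoint_left.mp hd1
  have hd2' := Finset.disjoint_left.mp hd2
  have hd3' := Finset.disjoint_left.mp hd3
  obtain ⟨x1, x2, hx12, hXeq⟩ := card_eq_two.mp hX2
  have hx1 : x1 ∈ X := by rw [hXeq]; simp
  have hx2 : x2 ∈ X := by rw [hXeq]; simp
  have hadj : ∀ s ∈ S, H.Adj s x1 ∧ H.Adj s x2 := by
    intro s hs
    obtain ⟨y, hy, hnsy⟩ := missSome hK4 hY3 (fun hsY => hd3' hsY hs) hYcl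
    have key : ∀ x ∈ X, H.Adj s x := by
      intro x hx
      by_contra hns
      exact noIndep3 hind (fun h => hd2' hx (show x ∈ S by rw [h]; exact hs))
        (fun h => hd1' hx (show x ∈ Y by rw [h]; exact hy))
        (fun h => hd3' (show s ∈ Y by rw [h]; exact hy) hs)
        (fun h => hns h.symm) (hsep x hx y hy) hnsy
    exact ⟨key x1 hx1, key x2 hx2⟩
  have hSind : ∀ a ∈ S, ∀ b ∈ S, a ≠ b → ¬ H.Adj a b := by
    intro a ha b hb hab hadj'
    exact noKfour' hK4 (hXcl x1 hx1 x2 hx2 hx12) ((hadj a ha).1.symm) ((hadj b hb).1.symm)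
      ((hadj a ha).2.symm) ((hadj b hb).2.symm) hadj'
  refine hind S ⟨?_, hS3⟩
  intro a ha b hb hab
  exact ⟨hab, hSind a (by simpa using ha) b (by simpa using hb) hab⟩

/-- The fully symmetric separation lemma. -/
private lemma keySym {H : SimpleGraph (Fin 8)} (hind : Hᶜ.CliqueFree 3)
    (hK4 : H.CliqueFree 4) (X Y S : Finset (Fin 8))
    (hd1 : Disjoint X Y) (hd2 : Disjoint X S) (hd3 : Disjoint Y S)
    (hcard : X.card + Y.card + S.card = 8)
    (hX : X.Nonempty) (hY : Y.Nonempty)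
    (hsep : ∀ a ∈ X, ∀ b ∈ Y, ¬ H.Adj a b)
    (hS : S.card ≤ 3) : False := by
  have hd1' := Finset.disjoint_left.mp hd1
  have hd2' := Finset.disjoint_left.mp hd2
  have hd3' := Finset.disjoint_left.mp hd3
  have hsep' : ∀ a ∈ Y, ∀ b ∈ X, ¬ H.Adj a b := fun a ha b hb h => hsep b hb a ha h.symm
  have hXcl : ∀ a ∈ X, ∀ b ∈ X, a ≠ b → H.Adj a b := by
    intro a ha b hb hab
    obtain ⟨y, hy⟩ := hY
    by_contra hns
    exact noIndep3 hind hab (fun h => hd1' ha (show a ∈ Y by rw [h]; exact hy))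
      (fun h => hd1' hb (show b ∈ Y by rw [h]; exact hy)) hns (hsep a ha y hy) (hsep b hb y hy)
  have hYcl : ∀ a ∈ Y, ∀ b ∈ Y, a ≠ b → H.Adj a b := by
    intro a ha b hb hab
    obtain ⟨x, hx⟩ := hX
    by_contra hns
    exact noIndep3 hind hab (fun h => hd1' (show a ∈ X by rw [h]; exact hx) ha)
      (fun h => hd1' (show b ∈ X by rw [h]; exact hx) hb) hns (hsep' a ha x hx) (hsep' b hb x hx)
  have big : ∀ T : Finset (Fin 8), 4 ≤ T.card →
      (∀ a ∈ T, ∀ b ∈ T, a ≠ b → H.Adj a b) → False := by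
    intro T hT hcl
    obtain ⟨t, hts, htc⟩ := Finset.exists_subset_card_eq hT
    exact noKfour hK4 htc (fun a ha b hb => hcl a (hts ha) b (hts hb))
  have hX3 : X.card ≤ 3 := by
    by_contra h
    exact big X (by omega) hXcl
  have hY3 : Y.card ≤ 3 := by
    by_contra h
    exact big Y (by omega) hYcl
  have hX1 : 1 ≤ X.card := card_pos.mpr hX
  have hY1 : 1 ≤ Y.card := card_pos.mpr hY
  rcases Nat.lt_or_ge X.card 3 with hXlt | hXge
  · exact case23 hind hK4 hd1 hd2 hd3 hsep hXcl hYcl (by omega) (by omega) (by omega)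
  · rcases Nat.lt_or_ge Y.card 3 with hYlt | hYge
    · exact case23 hind hK4 hd1.symm hd3 hd2 hsep' hYcl hXcl (by omega) (by omega) (by omega)
    · -- (3,3) case, S.card = 2
      have hX3' : X.card = 3 := by omega
      have hY3' : Y.card = 3 := by omega
      obtain ⟨s, hs⟩ : S.Nonempty := card_pos.mp (by omega)
      obtain ⟨x, hx, hnsx⟩ := missSome hK4 hX3' (fun hsX => hd2' hsX hs) hXcl
      obtain ⟨y, hy, hnsy⟩ := missSome hK4 hY3' (fun hsY => hd3' hsY hs) hYcl
      exact noIndep3 hind (fun h => hd2' (show s ∈ X by rw [h]; exact hx) hs)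
        (fun h => hd3' (show s ∈ Y by rw [h]; exact hy) hs)
        (fun h => hd1' hx (show x ∈ Y by rw [h]; exact hy)) hnsx hnsy (hsep x hx y hy)

private lemma keySep {H : SimpleGraph (Fin 8)} (hind : Hᶜ.CliqueFree 3)
    (hK4 : H.CliqueFree 4) (A B : Finset (Fin 8)) (hU : A ∪ B = Finset.univ)
    (hA : (A \ B).Nonempty) (hB : (B \ A).Nonempty)
    (hsep : ∀ a ∈ A \ B, ∀ b ∈ B \ A, ¬ H.Adj a b)
    (hS : (A ∩ B).card ≤ 3) : False := by
  refine keySym hind hK4 (A \ B) (B \ A) (A ∩ B) ?_ ?_ ?_ ?_ hA hB hsep hS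
  · rw [Finset.disjoint_left]
    intro a ha hb
    rw [Finset.mem_sdiff] at ha hb
    exact hb.2 ha.1
  · rw [Finset.disjoint_left]
    intro a ha hb
    rw [Finset.mem_sdiff] at ha
    rw [Finset.mem_inter] at hb
    exact ha.2 hb.2
  · rw [Finset.disjoint_left]
    intro a ha hb
    rw [Finset.mem_sdiff] at ha
    rw [Finset.mem_inter] at hb
    exact ha.2 hb.1
  · have h1 : (A \ B).card + (A ∩ B).card = A.card := by
      rw [Finset.card_sdiff_add_card_inter]
    have h2 : (B \ A).card + A.card = (B ∪ A).card := Finset.card_sdiff_add_card B A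
    have h3 : (B ∪ A).card = 8 := by
      rw [Finset.union_comm, hU]
      simp
    omega

/-- A graph on 8 vertices with no independent set of size 3 and no `K₄`
subgraph admits no separation of order 3; hence (given there are also no
separations of order at most 2) such a graph is 4-connected: it stays
connected after deleting any set of at most 3 vertices. -/
theorem stmt_9 (H : SimpleGraph (Fin 8))
    (hind : Hᶜ.CliqueFree 3) (hK4 : H.CliqueFree 4) :
    (∀ A B : Finset (Fin 8), A ∪ B = Finset.univ →
      (A \ B).Nonempty → (B \ A).Nonempty →
      (∀ a ∈ A \ B, ∀ b ∈ B \ A, ¬ H.Adj a b) →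
      (A ∩ B).card = 3 → False) ∧
    (∀ s : Set (Fin 8), s.ncard ≤ 3 → (H.induce sᶜ).Connected) := by
  classical
  constructor
  · intro A B hU hA hB hsep hS
    exact keySep hind hK4 A B hU hA hB hsep (le_of_eq hS)
  · intro s hs
    rw [SimpleGraph.connected_iff]
    have hne : (sᶜ : Set (Fin 8)).Nonempty := by
      rw [Set.nonempty_compl]
      intro h
      rw [h, Set.ncard_univ] at hs
      simp at hs
    refine ⟨?_, ⟨⟨hne.choose, hne.choose_spec⟩⟩⟩
    intro u v
    by_contra hreach
    set G := H.induce (sᶜ : Set (Fin 8)) with hG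
    set C : Finset (Fin 8) :=
      Finset.univ.filter (fun w => ∃ hw : w ∈ (sᶜ : Set (Fin 8)), G.Reachable u ⟨w, hw⟩)
      with hC
    set sF : Finset (Fin 8) := s.toFinset with hsF
    have hmemC : ∀ w, w ∈ C ↔ ∃ hw : w ∈ (sᶜ : Set (Fin 8)), G.Reachable u ⟨w, hw⟩ := by
      intro w; rw [hC]; simp
    have hmemsF : ∀ w, w ∈ sF ↔ w ∈ s := by intro w; rw [hsF]; simp
    have hCs : ∀ w, w ∈ C → w ∉ sF := by
      intro w hw hws
      obtain ⟨hw', _⟩ := (hmemC w).mp hw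
      exact hw' ((hmemsF w).mp hws)
    have hAB : ∀ w, w ∈ (C ∪ sF) \ (Cᶜ ∪ sF) ↔ w ∈ C := by
      intro w
      have h := hCs w
      simp only [Finset.mem_sdiff, Finset.mem_union, Finset.mem_compl]
      tauto
    have hBA : ∀ w, w ∈ (Cᶜ ∪ sF) \ (C ∪ sF) ↔ w ∉ C ∧ w ∉ sF := by
      intro w
      simp only [Finset.mem_sdiff, Finset.mem_union, Finset.mem_compl]
      tauto
    refine keySep hind hK4 (C ∪ sF) (Cᶜ ∪ sF) ?_ ?_ ?_ ?_ ?_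
    · apply Finset.eq_univ_of_forall
      intro w
      by_cases hw : w ∈ C <;>
        simp [hw, Finset.mem_union, Finset.mem_compl]
    · refine ⟨u.1, (hAB u.1).mpr ?_⟩
      rw [hmemC]
      exact ⟨u.2, by rw [Subtype.coe_eta]⟩
    · refine ⟨v.1, (hBA v.1).mpr ⟨?_, ?_⟩⟩
      · rw [hmemC]
        rintro ⟨hw, hr⟩
        exact hreach (by rwa [Subtype.coe_eta] at hr)
      · rw [hmemsF]
        exact v.2
    · intro a ha b hb hadj
      rw [hAB] at ha
      rw [hBA] at hb
      obtain ⟨haC, hra⟩ := (hmemC a).mp ha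
      have hbs : b ∈ (sᶜ : Set (Fin 8)) := fun hbs => hb.2 ((hmemsF b).mpr hbs)
      have : G.Reachable u ⟨b, hbs⟩ :=
        hra.trans (SimpleGraph.Adj.reachable (by exact hadj))
      exact hb.1 ((hmemC b).mpr ⟨hbs, this⟩)
    · have : (C ∪ sF) ∩ (Cᶜ ∪ sF) = sF := by
        ext w
        have h := hCs w
        simp only [Finset.mem_inter, Finset.mem_union, Finset.mem_compl]
        tauto
      rw [this, hsF, ← Set.ncard_eq_toFinset_card']
      exact hs
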